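/- Let (B, D_B, ev), (C, D_C, ev), (D, D_D, ev) be categories with duality, let F, G : C → D and F', G' : B → C be functors, and let α : F ∘ D_C → D_D ∘ Gᵒᵖ and α' : F' ∘ D_B → D_C ∘ G'ᵒᵖ be natural transformations. Define their composite αα' : F ∘ F' ∘ D_B → D_D ∘ (G ∘ G')ᵒᵖ as F applied to α' followed by α whiskered with G'ᵒᵖ. Then (αα')^T = α^T α'^T. -/

import Mathlib

open CategoryTheory Opposite

/-- A category with duality: a functor `D : Cᵒᵖ ⥤ C` together with an evaluation
natural transformation `ev : 𝟭 C ⟶ D.rightOp ⋙ D` such that the composite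
`D A → D D D A → D A` (namely `ev_{D A}` followed by `D (ev_A)`) is the identity. -/
structure CatWithDuality (C : Type*) [Category C] where
  D : Cᵒᵖ ⥤ C
  ev : 𝟭 C ⟶ D.rightOp ⋙ D
  ev_comp : ∀ A : C, ev.app (D.obj (op A)) ≫ D.map (ev.app A).op = 𝟙 (D.obj (op A))

/-- The transpose `g^T : A ⟶ D B` of a morphism `g : B ⟶ D A`, namely
`ev_A` followed by `D g`. -/
def CatWithDuality.transpose {C : Type*} [Category C] (S : CatWithDuality C)
    {A B : C} (g : B ⟶ S.D.obj (op A)) : A ⟶ S.D.obj (op B) :=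
  S.ev.app A ≫ S.D.map g.op

/-- The transpose `β^T : F ∘ D_C ⟶ D_D ∘ Gᵒᵖ` of a natural transformation
`β : G ∘ D_C ⟶ D_D ∘ Fᵒᵖ`; its component at `A` is
`ev_{F (D_C A)}` followed by `D_D (β_{D_C A})` followed by `D_D (G (ev_A))`. -/
def natTranspose {C : Type*} [Category C] {D : Type*} [Category D]
    (SC : CatWithDuality C) (SD : CatWithDuality D)
    {F G : C ⥤ D} (β : SC.D ⋙ G ⟶ F.op ⋙ SD.D) :
    SC.D ⋙ F ⟶ G.op ⋙ SD.D where
  app X := SD.ev.app (F.obj (SC.D.obj X)) ≫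
    SD.D.map (β.app (op (SC.D.obj X))).op ≫
    SD.D.map (G.map (SC.ev.app X.unop)).op
  naturality := by
    intro X Y f
    dsimp
    have h1 := SD.ev.naturality (F.map (SC.D.map f))
    dsimp at h1
    rw [reassoc_of% h1]
    simp only [Functor.rightOp_map, ← Functor.map_comp, ← op_comp, Category.assoc]
    congr 2
    congr 1
    have h3 := β.naturality ((SC.D.map f).op)
    dsimp at h3
    rw [← h3]
    have h4 := SC.ev.naturality f.unop
    dsimp at h4
    rw [← Category.assoc, ← Functor.map_comp, ← h4, Functor.map_comp, Category.assoc]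

/-- The composite `αα' : F ∘ F' ∘ D_B ⟶ D_D ∘ (G ∘ G')ᵒᵖ` of form transformations
`α : F ∘ D_C ⟶ D_D ∘ Gᵒᵖ` and `α' : F' ∘ D_B ⟶ D_C ∘ G'ᵒᵖ`, given by `F` applied
to `α'` followed by `α` whiskered with `G'ᵒᵖ`. -/
def natCompose {B : Type*} [Category B] {C : Type*} [Category C] {D : Type*} [Category D]
    (SB : CatWithDuality B) (SC : CatWithDuality C) (SD : CatWithDuality D)
    {F G : C ⥤ D} {F' G' : B ⥤ C}
    (α : SC.D ⋙ F ⟶ G.op ⋙ SD.D) (α' : SB.D ⋙ F' ⟶ G'.op ⋙ SC.D) :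
    SB.D ⋙ (F' ⋙ F) ⟶ (G' ⋙ G).op ⋙ SD.D :=
  Functor.whiskerRight α' F ≫ Functor.whiskerLeft G'.op α

/-- Transposition is compatible with composition of form transformations:
`(αα')^T = α^T α'^T`. -/
theorem natTranspose_natCompose
    {B : Type*} [Category B] {C : Type*} [Category C] {D : Type*} [Category D]
    (SB : CatWithDuality B) (SC : CatWithDuality C) (SD : CatWithDuality D)
    (F G : C ⥤ D) (F' G' : B ⥤ C)
    (α : SC.D ⋙ F ⟶ G.op ⋙ SD.D) (α' : SB.D ⋙ F' ⟶ G'.op ⋙ SC.D) :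
    natTranspose SB SD (natCompose SB SC SD α α') =
      natCompose SB SC SD (natTranspose SC SD α) (natTranspose SB SC α') := by
  ext X
  dsimp [natTranspose, natCompose]
  set k : G'.obj (SB.D.obj X) ⟶ SC.D.obj (op (F'.obj X.unop)) :=
    SC.ev.app (G'.obj (SB.D.obj X)) ≫ SC.D.map (α'.app (op (SB.D.obj X))).op ≫
      SC.D.map (F'.map (SB.ev.app X.unop)).op with hk
  have step1 : SC.ev.app (F'.obj X.unop) ≫ SC.D.map k.op =
      F'.map (SB.ev.app X.unop) ≫ α'.app (op (SB.D.obj X)) := by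
    have n1 := SC.ev.naturality (F'.map (SB.ev.app X.unop))
    have n2 := SC.ev.naturality (α'.app (op (SB.D.obj X)))
    dsimp at n1 n2
    rw [hk]
    simp only [op_comp, Functor.map_comp, Category.assoc]
    rw [reassoc_of% n1.symm, reassoc_of% n2.symm]
    slice_lhs 3 4 => rw [SC.ev_comp]
    simp
  have n3 := α.naturality k.op
  dsimp at n3
  have n4 := SD.ev.naturality (G.map k)
  dsimp at n4
  rw [reassoc_of% n4]
  simp only [← Functor.map_comp, ← op_comp, Category.assoc]
  rw [← n3]
  conv_rhs => rw [← Functor.map_comp_assoc, step1, Functor.map_comp_assoc]
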